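/- Let $(\Omega, \mathcal{A})$ be a measurable space, $M \geq 1$, and $A_0, \ldots, A_M$ pairwise disjoint measurable events. Let $\mathbf{Q}_0, \ldots, \mathbf{Q}_M$ be probability measures on $(\Omega, \mathcal{A})$ such that $\frac{1}{M}\sum_{j=1}^M \mathrm{KL}(\mathbf{Q}_j, \mathbf{Q}_0) \leq \kappa < \infty$. Then $\max_{j=0,\ldots,M} \mathbf{Q}_j(A_j^c) \geq \frac{1}{12}\min(1, M e^{-3\kappa})$. -/

import Mathlib

open MeasureTheory
open scoped ENNReal Classical

/-- Kullback–Leibler divergence `KL(Q, P)`, valued in `ℝ≥0∞`: equals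
`∫ log (dQ/dP) dQ` when `Q ≪ P` and the integrand is `Q`-integrable, `∞` otherwise. -/
noncomputable def klDivergence {Ω : Type*} [MeasurableSpace Ω]
    (Q P : Measure Ω) : ℝ≥0∞ :=
  if Q ≪ P ∧ Integrable (fun ω => Real.log (Q.rnDeriv P ω).toReal) Q
  then ENNReal.ofReal (∫ ω, Real.log ((Q.rnDeriv P ω).toReal) ∂Q)
  else ∞

lemma aux_lint_inv_le {Ω : Type*} [MeasurableSpace Ω]
    (Q P : Measure Ω) [IsProbabilityMeasure Q] [IsProbabilityMeasure P]
    (hQP : Q ≪ P) {B : Set Ω} (hB : MeasurableSet B) :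
    ∫⁻ ω in B, (Q.rnDeriv P ω)⁻¹ ∂Q ≤ P B := by
  have h := MeasureTheory.setLIntegral_rnDeriv_mul hQP
    (Measure.measurable_rnDeriv Q P).inv.aemeasurable hB
  simp only [Pi.inv_apply] at h
  rw [← h]
  calc ∫⁻ ω in B, Q.rnDeriv P ω * (Q.rnDeriv P ω)⁻¹ ∂P
      ≤ ∫⁻ _ in B, 1 ∂P := lintegral_mono fun ω => ENNReal.mul_inv_le_one _
    _ = P B := by simp

lemma aux_setIntegral_llr_ge {Ω : Type*} [MeasurableSpace Ω]
    (Q P : Measure Ω) [IsProbabilityMeasure Q] [IsProbabilityMeasure P]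
    (hQP : Q ≪ P)
    (hint : Integrable (fun ω => Real.log (Q.rnDeriv P ω).toReal) Q)
    {B : Set Ω} (hB : MeasurableSet B) {a : ℝ} (ha : 0 < a) :
    (Q B).toReal * (Real.log a + 1) - a * (P B).toReal ≤
      ∫ ω in B, Real.log (Q.rnDeriv P ω).toReal ∂Q := by
  set r : Ω → ℝ := fun ω => (Q.rnDeriv P ω).toReal with hr
  have hmeas_r : Measurable r := (Measure.measurable_rnDeriv Q P).ennreal_toReal
  have h_ae : ∀ᵐ ω ∂Q, 0 < Q.rnDeriv P ω ∧ Q.rnDeriv P ω ≠ ∞ :=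
    (Measure.rnDeriv_pos hQP).and (hQP.ae_le (Measure.rnDeriv_ne_top Q P))
  have h_pos : ∀ᵐ ω ∂Q, 0 < r ω := by
    filter_upwards [h_ae] with ω hω
    exact ENNReal.toReal_pos hω.1.ne' hω.2
  have h_ofReal : ∀ᵐ ω ∂Q, ENNReal.ofReal ((r ω)⁻¹) = (Q.rnDeriv P ω)⁻¹ := by
    filter_upwards [h_ae] with ω hω
    rw [hr, ← ENNReal.toReal_inv, ENNReal.ofReal_toReal (by simp [hω.1.ne'])]
  have key : ∫⁻ ω in B, ENNReal.ofReal ((r ω)⁻¹) ∂Q ≤ P B := by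
    calc ∫⁻ ω in B, ENNReal.ofReal ((r ω)⁻¹) ∂Q
        = ∫⁻ ω in B, (Q.rnDeriv P ω)⁻¹ ∂Q :=
          lintegral_congr_ae (ae_restrict_of_ae h_ofReal)
      _ ≤ P B := aux_lint_inv_le Q P hQP hB
  have hInt_inv : Integrable (fun ω => (r ω)⁻¹) (Q.restrict B) := by
    refine ⟨hmeas_r.inv.aestronglyMeasurable, ?_⟩
    rw [hasFiniteIntegral_iff_ofReal (Filter.Eventually.of_forall fun ω => inv_nonneg.2
      ENNReal.toReal_nonneg)]
    exact lt_of_le_of_lt key (measure_lt_top P B)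
  have hint_eq : ∫ ω in B, (r ω)⁻¹ ∂Q
      = (∫⁻ ω in B, ENNReal.ofReal ((r ω)⁻¹) ∂Q).toReal :=
    integral_eq_lintegral_of_nonneg_ae
      (Filter.Eventually.of_forall fun ω => inv_nonneg.2 ENNReal.toReal_nonneg)
      hmeas_r.inv.aestronglyMeasurable
  have hint_le : ∫ ω in B, (r ω)⁻¹ ∂Q ≤ (P B).toReal := by
    rw [hint_eq]
    exact ENNReal.toReal_mono (measure_ne_top P B) key
  have hInt_g : Integrable (fun ω => (Real.log a + 1) - a * (r ω)⁻¹) (Q.restrict B) :=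
    (integrable_const _).sub (hInt_inv.const_mul a)
  have hmono : ∫ ω in B, ((Real.log a + 1) - a * (r ω)⁻¹) ∂Q
      ≤ ∫ ω in B, Real.log (r ω) ∂Q := by
    refine integral_mono_ae hInt_g hint.integrableOn (ae_restrict_of_ae ?_)
    filter_upwards [h_pos] with ω hω
    have h := Real.log_le_sub_one_of_pos (show (0:ℝ) < a / r ω from div_pos ha hω)
    rw [Real.log_div ha.ne' hω.ne', div_eq_mul_inv] at h
    linarith
  have hcalc : ∫ ω in B, ((Real.log a + 1) - a * (r ω)⁻¹) ∂Q
      = (Q B).toReal * (Real.log a + 1) - a * ∫ ω in B, (r ω)⁻¹ ∂Q := by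
    rw [integral_sub (integrable_const _) (hInt_inv.const_mul a),
      setIntegral_const, integral_const_mul, smul_eq_mul]
    rfl
  have h5 := mul_le_mul_of_nonneg_left hint_le ha.le
  rw [hcalc] at hmono
  linarith

lemma aux_log11 : (2:ℝ) ≤ Real.log 11 := by
  rw [Real.le_log_iff_exp_le (by norm_num : (0:ℝ) < 11)]
  have h := Real.exp_one_lt_d9
  have h2 : Real.exp 2 = Real.exp 1 * Real.exp 1 := by
    rw [← Real.exp_add]; norm_num
  nlinarith [Real.exp_pos 1]

lemma aux_log12 : Real.log 12 ≤ 3 := by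
  rw [Real.log_le_iff_le_exp (by norm_num : (0:ℝ) < 12)]
  have h := Real.exp_one_gt_d9
  have h2 : Real.exp 3 = Real.exp 1 ^ 3 := by
    rw [← Real.exp_nat_mul]; norm_num
  have h3 : (2.7182818283:ℝ)^3 ≤ Real.exp 1 ^ 3 :=
    pow_le_pow_left₀ (by norm_num) h.le 3
  have h4 : (12:ℝ) ≤ (2.7182818283:ℝ)^3 := by norm_num
  linarith

set_option maxHeartbeats 2000000 in
/-- Multiple-hypothesis lower bound: if `A_0, …, A_M` are pairwise disjoint events and
`(1/M) ∑_{j=1}^M KL(Q_j, Q_0) ≤ κ`, then `max_j Q_j(A_jᶜ) ≥ (1/12) min(1, M e^{-3κ})`. -/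
theorem multiple_hypothesis_lower_bound
    {Ω : Type*} [MeasurableSpace Ω] (M : ℕ) (hM : 1 ≤ M)
    (A : Fin (M + 1) → Set Ω) (hA_meas : ∀ j, MeasurableSet (A j))
    (hA_disj : Pairwise (Function.onFun Disjoint A))
    (Q : Fin (M + 1) → Measure Ω) (hQ : ∀ j, IsProbabilityMeasure (Q j))
    (κ : ℝ)
    (hKL : (1 / (M : ℝ≥0∞)) * ∑ j ∈ Finset.univ.filter (fun j => j ≠ 0),
        klDivergence (Q j) (Q 0) ≤ ENNReal.ofReal κ) :
    ∃ j, ENNReal.ofReal ((1 / 12) * min 1 ((M : ℝ) * Real.exp (-3 * κ))) ≤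
      Q j (A j)ᶜ := by
  haveI := fun j => hQ j
  by_contra hcon
  push_neg at hcon
  set b : ℝ := (1 / 12) * min 1 ((M : ℝ) * Real.exp (-3 * κ)) with hbdef
  have hMpos : (0:ℝ) < M := by exact_mod_cast Nat.pos_of_ne_zero (by omega)
  have hMR : (1:ℝ) ≤ M := by exact_mod_cast hM
  have hb_pos : 0 < b := by
    apply mul_pos (by norm_num)
    exact lt_min one_pos (mul_pos hMpos (Real.exp_pos _))
  have hb_le : b ≤ 1 / 12 := by
    have h := min_le_left (1:ℝ) ((M : ℝ) * Real.exp (-3 * κ))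
    rw [hbdef]; nlinarith
  set J : Finset (Fin (M+1)) := Finset.univ.filter (fun j => j ≠ 0) with hJdef
  have hJcard : J.card = M := by
    rw [hJdef, Finset.filter_ne', Finset.card_erase_of_mem (Finset.mem_univ _),
      Finset.card_univ, Fintype.card_fin]
    omega
  have hJne : ∀ j ∈ J, j ≠ 0 := by
    intro j hj
    rw [hJdef, Finset.mem_filter] at hj
    exact hj.2
  have hJnonempty : J.Nonempty := Finset.card_pos.1 (by rw [hJcard]; omega)
  -- finiteness of KL terms
  have hSum_le : ∑ j ∈ J, klDivergence (Q j) (Q 0) ≤ (M : ℝ≥0∞) * ENNReal.ofReal κ := by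
    have h := mul_le_mul_right hKL (M : ℝ≥0∞)
    rwa [← mul_assoc, one_div, ENNReal.mul_inv_cancel
      (by exact_mod_cast (by omega : M ≠ 0)) (ENNReal.natCast_ne_top M), one_mul] at h
  have htop : (M : ℝ≥0∞) * ENNReal.ofReal κ ≠ ∞ :=
    ENNReal.mul_ne_top (ENNReal.natCast_ne_top M) ENNReal.ofReal_ne_top
  have hfin : ∀ j ∈ J, klDivergence (Q j) (Q 0) ≠ ∞ := fun j hj =>
    ne_top_of_le_ne_top htop
      ((Finset.single_le_sum (fun i _ => zero_le) hj).trans hSum_le)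
  have hcond : ∀ j ∈ J, (Q j ≪ Q 0) ∧
      Integrable (fun ω => Real.log ((Q j).rnDeriv (Q 0) ω).toReal) (Q j) := by
    intro j hj
    by_contra hc
    exact hfin j hj (by unfold klDivergence; rw [if_neg hc])
  set I : Fin (M+1) → ℝ :=
    fun j => ∫ ω, Real.log ((Q j).rnDeriv (Q 0) ω).toReal ∂(Q j) with hIdef
  have hKLeq : ∀ j ∈ J, klDivergence (Q j) (Q 0) = ENNReal.ofReal (I j) := by
    intro j hj
    unfold klDivergence
    rw [if_pos (hcond j hj)]
  have hsumI : ∑ j ∈ J, I j ≤ M * max κ 0 := by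
    have h1 : ∑ j ∈ J, I j ≤ ∑ j ∈ J, (ENNReal.ofReal (I j)).toReal :=
      Finset.sum_le_sum fun j hj => by
        rw [ENNReal.toReal_ofReal']; exact le_max_left _ _
    have h2 : ∑ j ∈ J, (ENNReal.ofReal (I j)).toReal
        = (∑ j ∈ J, ENNReal.ofReal (I j)).toReal :=
      (ENNReal.toReal_sum fun a _ => ENNReal.ofReal_ne_top).symm
    have h3 : (∑ j ∈ J, ENNReal.ofReal (I j)).toReal
        ≤ ((M:ℝ≥0∞) * ENNReal.ofReal κ).toReal := by
      apply ENNReal.toReal_mono htop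
      calc ∑ j ∈ J, ENNReal.ofReal (I j)
          = ∑ j ∈ J, klDivergence (Q j) (Q 0) :=
            Finset.sum_congr rfl fun j hj => (hKLeq j hj).symm
        _ ≤ _ := hSum_le
    have h4 : ((M:ℝ≥0∞) * ENNReal.ofReal κ).toReal = M * max κ 0 := by
      simp [ENNReal.toReal_mul, ENNReal.toReal_ofReal']
    linarith
  -- real-valued probabilities
  have hc_lt : ∀ j, (Q j (A j)ᶜ).toReal < b := fun j =>
    ENNReal.toReal_lt_of_lt_ofReal (hcon j)
  have hq_eq : ∀ j, (Q j (A j)).toReal = 1 - (Q j (A j)ᶜ).toReal := by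
    intro j
    have h := prob_add_prob_compl (μ := Q j) (hA_meas j)
    have h2 : (Q j (A j)).toReal + (Q j (A j)ᶜ).toReal = 1 := by
      rw [← ENNReal.toReal_add (measure_ne_top _ _) (measure_ne_top _ _), h,
        ENNReal.toReal_one]
    linarith
  have hq_gt : ∀ j, 11/12 < (Q j (A j)).toReal := by
    intro j
    have h1 := hc_lt j
    have h2 := hq_eq j
    linarith
  have hq_le : ∀ j, (Q j (A j)).toReal ≤ 1 := by
    intro j
    have := ENNReal.toReal_nonneg (a := Q j (A j)ᶜ)
    linarith [hq_eq j]
  have hp_pos : ∀ j ∈ J, 0 < (Q 0 (A j)).toReal := by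
    intro j hj
    rcases eq_or_ne (Q 0 (A j)) 0 with h0 | h0
    · have hz : Q j (A j) = 0 := (hcond j hj).1 h0
      have := hq_gt j
      rw [hz] at this
      norm_num at this
    · exact ENNReal.toReal_pos h0 (measure_ne_top _ _)
  -- sum of Q0-masses
  have hd : (↑J : Set (Fin (M+1))).PairwiseDisjoint A :=
    fun i _ j _ hij => hA_disj hij
  have hS_le : ∑ j ∈ J, (Q 0 (A j)).toReal ≤ (Q 0 (A 0)ᶜ).toReal := by
    rw [← ENNReal.toReal_sum (fun _ _ => measure_ne_top _ _)]
    apply ENNReal.toReal_mono (measure_ne_top _ _)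
    rw [← measure_biUnion_finset hd fun j _ => hA_meas j]
    refine measure_mono (Set.iUnion₂_subset fun j hj => ?_)
    exact Disjoint.subset_compl_right (hA_disj (hJne j hj))
  set S : ℝ := ∑ j ∈ J, (Q 0 (A j)).toReal with hSdef
  have hS_lt : S < b := lt_of_le_of_lt hS_le (hc_lt 0)
  have hS_pos : 0 < S :=
    Finset.sum_pos (fun j hj => hp_pos j hj) hJnonempty
  have hp_lt : ∀ j ∈ J, (Q 0 (A j)).toReal < 1/12 := by
    intro j hj
    have h1 : (Q 0 (A j)).toReal ≤ S :=
      Finset.single_le_sum (f := fun i => (Q 0 (A i)).toReal)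
        (fun i _ => ENNReal.toReal_nonneg) hj
    linarith
  -- per-j lower bound on I j
  have hI_ge : ∀ j ∈ J,
      Real.log (11/12) - (11/12) * Real.log ((Q 0 (A j)).toReal) - 1 ≤ I j := by
    intro j hj
    obtain ⟨hac, hint⟩ := hcond j hj
    have hqq := hq_gt j
    have hqq1 := hq_le j
    have hpp := hp_pos j hj
    have hpp1 := hp_lt j hj
    have ha : (0:ℝ) < (Q j (A j)).toReal / (Q 0 (A j)).toReal :=
      div_pos (by linarith) hpp
    have h1 := aux_setIntegral_llr_ge (Q j) (Q 0) hac hint (hA_meas j) ha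
    have h2 := aux_setIntegral_llr_ge (Q j) (Q 0) hac hint (hA_meas j).compl
      (one_pos (α := ℝ))
    have hsplit : (∫ ω in A j, Real.log ((Q j).rnDeriv (Q 0) ω).toReal ∂(Q j))
        + ∫ ω in (A j)ᶜ, Real.log ((Q j).rnDeriv (Q 0) ω).toReal ∂(Q j) = I j :=
      integral_add_compl (hA_meas j) hint
    have e1 : (Q j (A j)).toReal / (Q 0 (A j)).toReal * (Q 0 (A j)).toReal
        = (Q j (A j)).toReal := div_mul_cancel₀ _ hpp.ne'
    have hlogdiv : Real.log ((Q j (A j)).toReal / (Q 0 (A j)).toReal)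
        = Real.log (Q j (A j)).toReal - Real.log (Q 0 (A j)).toReal :=
      Real.log_div (by linarith) hpp.ne'
    have hcompl_le : (Q 0 (A j)ᶜ).toReal ≤ 1 := by
      have h := prob_le_one (μ := Q 0) (s := (A j)ᶜ)
      calc (Q 0 (A j)ᶜ).toReal ≤ (1:ℝ≥0∞).toReal :=
            ENNReal.toReal_mono (by norm_num) h
        _ = 1 := ENNReal.toReal_one
    have hc0 : (0:ℝ) ≤ (Q j (A j)ᶜ).toReal := ENNReal.toReal_nonneg
    have hlogq : Real.log (11/12) ≤ (Q j (A j)).toReal * Real.log (Q j (A j)).toReal := by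
      have l1 : Real.log (11/12) ≤ Real.log (Q j (A j)).toReal :=
        Real.log_le_log (by norm_num) hqq.le
      have l2 : Real.log (11/12) < 0 := Real.log_neg (by norm_num) (by norm_num)
      nlinarith
    have hlogp : Real.log (Q 0 (A j)).toReal < 0 :=
      Real.log_neg hpp (by linarith)
    have hmul : (Q j (A j)).toReal * Real.log (Q 0 (A j)).toReal
        ≤ (11/12) * Real.log (Q 0 (A j)).toReal := by nlinarith
    rw [hlogdiv] at h1
    rw [Real.log_one] at h2
    rw [e1] at h1
    linarith [h1, h2, hsplit, hlogq, hmul, hcompl_le, hc0]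
  -- Jensen for log
  have hJensen : ∑ j ∈ J, Real.log ((Q 0 (A j)).toReal) ≤ M * Real.log (S / M) := by
    have hSM : (0:ℝ) < S / M := div_pos hS_pos hMpos
    have key : ∀ j ∈ J, Real.log ((Q 0 (A j)).toReal)
        ≤ Real.log (S/M) + (Q 0 (A j)).toReal / (S/M) - 1 := by
      intro j hj
      have h := Real.log_le_sub_one_of_pos (div_pos (hp_pos j hj) hSM)
      rw [Real.log_div (hp_pos j hj).ne' hSM.ne'] at h
      linarith
    calc ∑ j ∈ J, Real.log ((Q 0 (A j)).toReal)
        ≤ ∑ j ∈ J, (Real.log (S/M) + (Q 0 (A j)).toReal / (S/M) - 1) :=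
          Finset.sum_le_sum key
      _ = M * Real.log (S/M) + S/(S/M) - M := by
          rw [Finset.sum_sub_distrib, Finset.sum_add_distrib, Finset.sum_const,
            Finset.sum_const, ← Finset.sum_div, hJcard, ← hSdef]
          push_cast
          ring
      _ = M * Real.log (S/M) := by
          have e : S / (S / (M:ℝ)) = (M:ℝ) := by
            rw [div_div_eq_mul_div, mul_comm S (M:ℝ), mul_div_assoc,
              div_self hS_pos.ne', mul_one]
          rw [e]; ring
  -- combine
  have htot : Real.log (11/12) - 1 - (11/12) * Real.log (S/M) ≤ max κ 0 := by
    have h1 : ∑ j ∈ J, (Real.log (11/12) - (11/12) * Real.log ((Q 0 (A j)).toReal) - 1)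
        ≤ ∑ j ∈ J, I j := Finset.sum_le_sum hI_ge
    have h2 : ∑ j ∈ J, (Real.log (11/12) - (11/12) * Real.log ((Q 0 (A j)).toReal) - 1)
        = M * (Real.log (11/12) - 1)
          - (11/12) * ∑ j ∈ J, Real.log ((Q 0 (A j)).toReal) := by
      rw [Finset.sum_sub_distrib, Finset.sum_sub_distrib, Finset.sum_const,
        Finset.sum_const, ← Finset.mul_sum, hJcard]
      push_cast
      ring
    have h3 : (M:ℝ) * (Real.log (11/12) - 1 - (11/12) * Real.log (S/M))
        ≤ M * max κ 0 := by nlinarith [hJensen, hsumI]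
    exact le_of_mul_le_mul_left (by linarith) hMpos
  have hlogSM : Real.log (S/M) ≤ Real.log b - Real.log M := by
    have h1 : Real.log (S/M) ≤ Real.log (b/M) :=
      Real.log_le_log (div_pos hS_pos hMpos) (by gcongr)
    rw [Real.log_div hb_pos.ne' hMpos.ne'] at h1
    exact h1
  have hlog1112 : Real.log (11/12) = Real.log 11 - Real.log 12 :=
    Real.log_div (by norm_num) (by norm_num)
  have hlogM : 0 ≤ Real.log M := Real.log_nonneg hMR
  have h11 := aux_log11
  have h12 := aux_log12
  have hfinal : Real.log 11 - Real.log 12 - 1 - (11/12) * (Real.log b - Real.log M)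
      ≤ max κ 0 := by
    have : Real.log (11/12) - 1 - (11/12) * (Real.log b - Real.log M)
        ≤ Real.log (11/12) - 1 - (11/12) * Real.log (S/M) := by nlinarith [hlogSM]
    rw [hlog1112] at this htot
    linarith
  rcases le_or_gt 1 ((M : ℝ) * Real.exp (-3 * κ)) with hmin | hmin
  · -- b = 1/12
    have hbeq : b = 1/12 := by rw [hbdef, min_eq_left hmin]; norm_num
    have hlogb : Real.log b = - Real.log 12 := by
      rw [hbeq, one_div, Real.log_inv]
    have hκle : κ ≤ Real.log M / 3 := by
      have h := Real.log_le_log (by norm_num) hmin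
      rw [Real.log_one, Real.log_mul hMpos.ne' (Real.exp_pos _).ne', Real.log_exp] at h
      linarith
    have hκ' : max κ 0 ≤ Real.log M / 3 := max_le hκle (by linarith)
    rw [hlogb] at hfinal
    linarith
  · -- b = (1/12) * M * exp (-3κ)
    have hbeq : b = (1/12) * ((M:ℝ) * Real.exp (-3 * κ)) := by
      rw [hbdef, min_eq_right hmin.le]
    have hlogb : Real.log b = - Real.log 12 + Real.log M + (-3 * κ) := by
      rw [hbeq, Real.log_mul (by norm_num) (mul_pos hMpos (Real.exp_pos _)).ne',
        Real.log_mul hMpos.ne' (Real.exp_pos _).ne', Real.log_exp, one_div,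
        Real.log_inv]
      ring
    have hκpos : 0 < κ := by
      have h := Real.log_lt_log (mul_pos hMpos (Real.exp_pos _)) hmin
      rw [Real.log_one, Real.log_mul hMpos.ne' (Real.exp_pos _).ne', Real.log_exp] at h
      linarith
    have hκ' : max κ 0 = κ := max_eq_left hκpos.le
    rw [hlogb, hκ'] at hfinal
    linarith
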